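/- Let (c_n) ∈ ℓ²(ℝ) and define, for p in the closed ℓ²-probability simplex Δ̄, the vector field W_c(p) with components W_c(p)_n = p_n c_n − (∑_{k=0}^∞ c_k p_k) p_n. Then W_c(p) ∈ ℓ¹ for every p ∈ Δ̄, and W_c satisfies the global Lipschitz estimate ‖W_c(p) − W_c(q)‖_{ℓ¹} ≤ 3 (sup_n |c_n|) · ‖p − q‖_{ℓ¹} for all p, q ∈ Δ̄. -/

import Mathlib

/-- The closed ℓ²-probability simplex `Δ̄`. -/
def closedSimplex : Set (ℕ → ℝ) :=
  {p | Summable p ∧ (∀ n, 0 ≤ p n) ∧ ∑' n, p n = 1}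

/-- The ℓ²-Fisher–Rao gradient vector field of the linear objective:
`W_c(p)_n = p_n c_n − (∑_k c_k p_k) p_n`. -/
noncomputable def W (c p : ℕ → ℝ) (n : ℕ) : ℝ :=
  p n * c n - (∑' k, c k * p k) * p n

/-- for `(c_n) ∈ ℓ²`, `W_c(p) ∈ ℓ¹` for every `p ∈ Δ̄`, and `W_c`
satisfies the global Lipschitz estimate
`‖W_c(p) − W_c(q)‖_{ℓ¹} ≤ 3 (sup_n |c_n|) ‖p − q‖_{ℓ¹}`. -/
theorem gradient_field_lipschitz (c : ℕ → ℝ) (hc : Summable (fun n => c n ^ 2)) :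
    (∀ p ∈ closedSimplex, Summable (fun n => |W c p n|)) ∧
    ∀ p ∈ closedSimplex, ∀ q ∈ closedSimplex,
      (∑' n, |W c p n - W c q n|) ≤ 3 * (⨆ n, |c n|) * ∑' n, |p n - q n| := by
  have habs : Filter.Tendsto (fun n => |c n|) Filter.atTop (nhds 0) := by
    have h2 := hc.tendsto_atTop_zero
    have h3 : Filter.Tendsto (fun n => Real.sqrt (c n ^ 2)) Filter.atTop (nhds (Real.sqrt 0)) :=
      (Real.continuous_sqrt.tendsto 0).comp h2
    simpa [Real.sqrt_sq_eq_abs] using h3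
  have hbdd : BddAbove (Set.range fun n => |c n|) := habs.bddAbove_range
  set M := ⨆ n, |c n| with hMdef
  have hM : ∀ n, |c n| ≤ M := fun n => le_ciSup hbdd n
  have hM0 : 0 ≤ M := le_trans (abs_nonneg _) (hM 0)
  -- summability of c * p
  have hsum_cp : ∀ p ∈ closedSimplex, Summable (fun k => c k * p k) := by
    intro p hp
    obtain ⟨hps, hpn, _⟩ := hp
    refine Summable.of_norm_bounded (hps.mul_left M) (fun k => ?_)
    rw [Real.norm_eq_abs, abs_mul]
    calc |c k| * |p k| ≤ M * |p k| := mul_le_mul_of_nonneg_right (hM k) (abs_nonneg _)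
      _ = M * p k := by rw [abs_of_nonneg (hpn k)]
  have hS_bound : ∀ p ∈ closedSimplex, |∑' k, c k * p k| ≤ M := by
    intro p hp
    have h1 : |∑' k, c k * p k| ≤ ∑' k, |c k * p k| := by
      simpa only [Real.norm_eq_abs] using norm_tsum_le_tsum_norm (f := fun k => c k * p k) (by simpa only [Real.norm_eq_abs] using (hsum_cp p hp).abs)
    obtain ⟨hps, hpn, hp1⟩ := hp
    have h2 : (∑' k, |c k * p k|) ≤ ∑' k, M * p k := by
      refine Summable.tsum_le_tsum (fun k => ?_) ((hsum_cp p ⟨hps, hpn, hp1⟩).abs) (hps.mul_left M)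
      rw [abs_mul, abs_of_nonneg (hpn k)]
      exact mul_le_mul_of_nonneg_right (hM k) (hpn k)
    have h3 : (∑' k, M * p k) = M := by rw [tsum_mul_left, hp1, mul_one]
    calc |∑' k, c k * p k| ≤ ∑' k, |c k * p k| := h1
      _ ≤ ∑' k, M * p k := h2
      _ = M := h3
  -- first part
  have hWb : ∀ p ∈ closedSimplex, ∀ n, |W c p n| ≤ 2 * M * p n := by
    intro p hp n
    obtain ⟨hps, hpn, hp1⟩ := hp
    have : |W c p n| ≤ |p n * c n| + |(∑' k, c k * p k) * p n| := abs_sub _ _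
    refine this.trans ?_
    rw [abs_mul, abs_mul, abs_of_nonneg (hpn n)]
    have e1 : p n * |c n| ≤ p n * M := mul_le_mul_of_nonneg_left (hM n) (hpn n)
    have e2 : |∑' k, c k * p k| * p n ≤ M * p n :=
      mul_le_mul_of_nonneg_right (hS_bound p ⟨hps, hpn, hp1⟩) (hpn n)
    nlinarith
  have hWsum : ∀ p ∈ closedSimplex, Summable (fun n => |W c p n|) := by
    intro p hp
    exact Summable.of_nonneg_of_le (fun n => abs_nonneg _) (hWb p hp)
      (hp.1.mul_left (2 * M))
  refine ⟨hWsum, ?_⟩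
  intro p hp q hq
  obtain ⟨hps, hpn, hp1⟩ := hp
  obtain ⟨hqs, hqn, hq1⟩ := hq
  set D := ∑' n, |p n - q n| with hDdef
  have hDsum : Summable (fun n => |p n - q n|) := (hps.sub hqs).abs
  have hD0 : 0 ≤ D := tsum_nonneg (fun n => abs_nonneg _)
  set Sp := ∑' k, c k * p k with hSp
  set Sq := ∑' k, c k * q k with hSq
  have hSpq : |Sp - Sq| ≤ M * D := by
    have hsub : Summable (fun k => c k * (p k - q k)) := by
      refine Summable.of_norm_bounded (hDsum.mul_left M) (fun k => ?_)
      rw [Real.norm_eq_abs, abs_mul]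
      exact mul_le_mul_of_nonneg_right (hM k) (abs_nonneg _)
    have e : Sp - Sq = ∑' k, c k * (p k - q k) := by
      rw [hSp, hSq, ← Summable.tsum_sub (hsum_cp p ⟨hps, hpn, hp1⟩) (hsum_cp q ⟨hqs, hqn, hq1⟩)]
      congr 1; funext k; ring
    rw [e]
    calc |∑' k, c k * (p k - q k)| ≤ ∑' k, |c k * (p k - q k)| := by
          simpa only [Real.norm_eq_abs] using norm_tsum_le_tsum_norm (f := fun k => c k * (p k - q k)) (by simpa only [Real.norm_eq_abs] using hsub.abs)
      _ ≤ ∑' k, M * |p k - q k| := by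
          refine Summable.tsum_le_tsum (fun k => ?_) hsub.abs (hDsum.mul_left M)
          rw [abs_mul]
          exact mul_le_mul_of_nonneg_right (hM k) (abs_nonneg _)
      _ = M * D := by rw [tsum_mul_left]
  have hSpb : |Sp| ≤ M := hS_bound p ⟨hps, hpn, hp1⟩
  have hpt : ∀ n, |W c p n - W c q n| ≤ 2 * M * |p n - q n| + M * D * q n := by
    intro n
    have e : W c p n - W c q n = (p n - q n) * c n - Sp * (p n - q n) - (Sp - Sq) * q n := by
      simp only [W, hSp, hSq]; ring
    rw [e]
    have t1 : |(p n - q n) * c n - Sp * (p n - q n) - (Sp - Sq) * q n|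
        ≤ |(p n - q n) * c n| + |Sp * (p n - q n)| + |(Sp - Sq) * q n| := by
      calc _ ≤ |(p n - q n) * c n - Sp * (p n - q n)| + |(Sp - Sq) * q n| := abs_sub _ _
        _ ≤ _ := by
            have := abs_sub ((p n - q n) * c n) (Sp * (p n - q n))
            linarith
    refine t1.trans ?_
    rw [abs_mul, abs_mul, abs_mul, abs_of_nonneg (hqn n)]
    have e1 : |p n - q n| * |c n| ≤ |p n - q n| * M :=
      mul_le_mul_of_nonneg_left (hM n) (abs_nonneg _)
    have e2 : |Sp| * |p n - q n| ≤ M * |p n - q n| :=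
      mul_le_mul_of_nonneg_right hSpb (abs_nonneg _)
    have e3 : |Sp - Sq| * q n ≤ M * D * q n :=
      mul_le_mul_of_nonneg_right hSpq (hqn n)
    nlinarith
  have hRsum : Summable (fun n => 2 * M * |p n - q n| + M * D * q n) :=
    (hDsum.mul_left (2 * M)).add (hqs.mul_left (M * D))
  have hLsum : Summable (fun n => |W c p n - W c q n|) :=
    Summable.of_nonneg_of_le (fun n => abs_nonneg _) hpt hRsum
  calc (∑' n, |W c p n - W c q n|) ≤ ∑' n, (2 * M * |p n - q n| + M * D * q n) :=
        Summable.tsum_le_tsum hpt hLsum hRsum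
    _ = 2 * M * D + M * D * 1 := by
        rw [Summable.tsum_add (hDsum.mul_left (2 * M)) (hqs.mul_left (M * D)), tsum_mul_left,
          tsum_mul_left, hq1]
    _ = 3 * M * D := by ring
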